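/- Let c_1,...,c_m be positive integers with gcd(c_1,...,c_m) = 1, and let B(λ) be the number of (x_1,...,x_m) ∈ ℕ^m with ∑ c_i x_i = λ. Then B(λ) ~ λ^{m−1} / ((m−1)! · c_1 ⋯ c_m) as λ → ∞, i.e., the limit of B(λ)·(m−1)!·c_1⋯c_m / λ^{m−1} as λ → ∞ equals 1. -/

import Mathlib

namespace Stmt11


/-- Number of solutions of ∑ c i * x i ≤ Λ. -/
noncomputable def S (m : ℕ) (c : Fin m → ℕ) (Λ : ℕ) : ℕ :=
  Nat.card {x : Fin m → ℕ // ∑ i, c i * x i ≤ Λ}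

lemma finite_le {m : ℕ} {c : Fin m → ℕ} (hc : ∀ i, 0 < c i) (Λ : ℕ) :
    Finite {x : Fin m → ℕ // ∑ i, c i * x i ≤ Λ} := by
  apply Finite.of_injective (fun x => (fun i => (⟨x.1 i, by
    have h1 : c i * x.1 i ≤ Λ := le_trans (Finset.single_le_sum (f := fun j => c j * x.1 j)
      (fun j _ => Nat.zero_le _) (Finset.mem_univ i)) x.2
    have := Nat.le_of_lt_succ (Nat.lt_succ_of_le (le_trans (Nat.le_mul_of_pos_left _ (hc i)) h1))
    omega⟩ : Fin (Λ+1))) : _ → (Fin m → Fin (Λ+1)))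
  intro x y hxy
  ext i
  exact congrArg Fin.val (congrFun hxy i)

lemma finite_eq {m : ℕ} {c : Fin m → ℕ} (hc : ∀ i, 0 < c i) (lam : ℕ) :
    Finite {x : Fin m → ℕ // ∑ i, c i * x i = lam} := by
  have := finite_le hc lam
  exact Finite.of_injective (fun x => (⟨x.1, x.2.le⟩ : {x : Fin m → ℕ // ∑ i, c i * x i ≤ lam}))
    (fun a b hab => Subtype.ext (by simpa using congrArg Subtype.val hab))

lemma ncard_sigma {ι : Type*} [Fintype ι] (f : ι → Type*) [∀ i, Finite (f i)] :
    Nat.card (Σ i, f i) = ∑ i, Nat.card (f i) := by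
  have : ∀ i, Fintype (f i) := fun i => Fintype.ofFinite _
  classical
  simp [Nat.card_eq_fintype_card, Fintype.card_sigma]

lemma S_zero (c : Fin 0 → ℕ) (Λ : ℕ) : S 0 c Λ = 1 := by
  have : Unique {x : Fin 0 → ℕ // ∑ i, c i * x i ≤ Λ} :=
    { default := ⟨finZeroElim, by simp⟩
      uniq := fun a => Subtype.ext (funext fun i => i.elim0) }
  simp [S, Nat.card_unique]

lemma S_succ {m : ℕ} (c : Fin (m+1) → ℕ) (hc : ∀ i, 0 < c i) (Λ : ℕ) :
    S (m+1) c Λ = ∑ k ∈ Finset.range (Λ / c 0 + 1),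
      S m (fun i => c i.succ) (Λ - c 0 * k) := by
  have h0 := hc 0
  have hfin : ∀ μ : ℕ, Finite {y : Fin m → ℕ // ∑ i, (fun i => c i.succ) i * y i ≤ μ} :=
    fun μ => finite_le (fun i => hc i.succ) μ
  have e : {x : Fin (m+1) → ℕ // ∑ i, c i * x i ≤ Λ} ≃
      Σ k : Fin (Λ / c 0 + 1), {y : Fin m → ℕ // ∑ i, c i.succ * y i ≤ Λ - c 0 * k} := by
    refine ⟨fun x => ⟨⟨x.1 0, ?_⟩, ⟨Fin.tail x.1, ?_⟩⟩, fun kx => ⟨Fin.cons kx.1.1 kx.2.1, ?_⟩, ?_, ?_⟩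
    · have hx := x.2
      rw [Fin.sum_univ_succ] at hx
      have h1 : c 0 * x.1 0 ≤ Λ := le_trans (Nat.le_add_right _ _) hx
      have : x.1 0 ≤ Λ / c 0 := Nat.le_div_iff_mul_le h0 |>.2 (by rw [Nat.mul_comm]; exact h1)
      omega
    · have hx := x.2
      rw [Fin.sum_univ_succ] at hx
      simp only [Fin.tail]
      omega
    · rcases kx with ⟨⟨k, hk⟩, ⟨y, hy⟩⟩
      rw [Fin.sum_univ_succ]
      simp only [Fin.cons_zero, Fin.cons_succ]
      have hkΛ : c 0 * k ≤ Λ := by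
        have : k ≤ Λ / c 0 := Nat.lt_succ_iff.1 hk
        calc c 0 * k ≤ c 0 * (Λ / c 0) := Nat.mul_le_mul_left _ this
        _ ≤ Λ := Nat.mul_div_le Λ (c 0)
      simp only [Fin.val_mk] at hy ⊢
      omega
    · rintro ⟨x, hx⟩
      simp only
      congr 1
      exact funext fun i => Fin.cases rfl (fun j => rfl) i
    · rintro ⟨⟨k, hk⟩, ⟨y, hy⟩⟩
      simp [Fin.tail]
      rfl
  rw [S, Nat.card_congr e, ncard_sigma]
  rw [Fin.sum_univ_eq_sum_range (fun k => Nat.card {y : Fin m → ℕ // ∑ i, c i.succ * y i ≤ Λ - c 0 * k})]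
  rfl


/-- Key inequality: in ℕ, a^(p+1) ≤ b^(p+1) + (p+1)*(a-b)*a^p when b ≤ a. -/
lemma key_low (p a b : ℕ) (h : b ≤ a) : a^(p+1) ≤ b^(p+1) + (p+1)*(a-b)*a^p := by
  have : (a:ℤ)^(p+1) - (b:ℤ)^(p+1) ≤ (p+1)*((a:ℤ)-b)*a^p := by
    rw [← geom_sum₂_mul (a:ℤ) (b:ℤ) (p+1)]
    have hb0 : (0:ℤ) ≤ b := Int.natCast_nonneg b
    have hab : (b:ℤ) ≤ a := by exact_mod_cast h
    have hsum : (∑ i ∈ Finset.range (p+1), (a:ℤ)^i * (b:ℤ)^(p-i)) ≤ (p+1) * (a:ℤ)^p := by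
      calc (∑ i ∈ Finset.range (p+1), (a:ℤ)^i * (b:ℤ)^(p-i))
          ≤ ∑ i ∈ Finset.range (p+1), (a:ℤ)^p := by
            apply Finset.sum_le_sum
            intro i hi
            have hi' : i < p + 1 := Finset.mem_range.1 hi
            calc (a:ℤ)^i * (b:ℤ)^(p-i) ≤ (a:ℤ)^i * (a:ℤ)^(p-i) := by
                  apply mul_le_mul_of_nonneg_left (pow_le_pow_left₀ hb0 hab _)
                  positivity
              _ = (a:ℤ)^p := by rw [← pow_add]; congr 1; omega
        _ = (p+1) * (a:ℤ)^p := by simp [mul_comm]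
    have hd : (0:ℤ) ≤ (a:ℤ) - b := by omega
    calc (∑ i ∈ Finset.range (p + 1), (a:ℤ) ^ i * (b:ℤ) ^ (p + 1 - 1 - i)) * ((a:ℤ) - b)
        = (∑ i ∈ Finset.range (p + 1), (a:ℤ) ^ i * (b:ℤ) ^ (p - i)) * ((a:ℤ) - b) := by norm_num
      _ ≤ ((p+1) * (a:ℤ)^p) * ((a:ℤ) - b) := mul_le_mul_of_nonneg_right hsum hd
      _ = (p+1)*((a:ℤ)-b)*a^p := by ring
  have h2 : (a:ℤ)^(p+1) ≤ (b:ℤ)^(p+1) + (p+1)*((a:ℤ)-b)*a^p := by linarith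
  have := h2
  zify [h]
  linarith

/-- Key inequality: (p+1)*c*b^p + b^(p+1) ≤ (b+c)^(p+1). -/
lemma key_high (p c b : ℕ) : (p+1)*c*b^p + b^(p+1) ≤ (b+c)^(p+1) := by
  induction p with
  | zero => simp [pow_succ]; ring_nf; omega
  | succ p ih =>
    have h1 : (b+c)^(p+2) = (b+c) * (b+c)^(p+1) := by ring
    have h2 : (b+c) * ((p+1)*c*b^p + b^(p+1)) ≤ (b+c) * (b+c)^(p+1) :=
      Nat.mul_le_mul_left _ ih
    have h3 : (p+2)*c*b^(p+1) + b^(p+2) ≤ (b+c) * ((p+1)*c*b^p + b^(p+1)) := by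
      have expand : (b+c) * ((p+1)*c*b^p + b^(p+1))
          = (p+1)*c*b^(p+1) + b^(p+2) + c*b^(p+1) + (p+1)*c^2*b^p := by ring
      rw [expand]
      have : (p+2)*c*b^(p+1) = (p+1)*c*b^(p+1) + c*b^(p+1) := by ring
      omega
    calc (p+2)*c*b^(p+1) + b^(p+2) ≤ (b+c) * (b+c)^(p+1) := le_trans h3 h2
      _ = (b+c)^(p+2) := h1.symm

/-- Telescoping lower bound. -/
lemma tel_low_aux (p c Λ : ℕ) (hc : 0 < c) :
    ∀ N, Λ^(p+1) ≤ (p+1) * c * (∑ k ∈ Finset.range N, (Λ - c*k)^p) + (Λ - c*N)^(p+1) := by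
  intro N
  induction N with
  | zero => simp
  | succ N ih =>
    have hms : c*(N+1) = c*N + c := by ring
    rw [Finset.sum_range_succ]
    have key := key_low p (Λ - c*N) (Λ - c*(N+1)) (by omega)
    have hd : (Λ - c*N) - (Λ - c*(N+1)) ≤ c := by omega
    have : (Λ - c*N)^(p+1) ≤ (Λ - c*(N+1))^(p+1) + (p+1)*c*(Λ-c*N)^p := by
      calc (Λ - c*N)^(p+1) ≤ (Λ - c*(N+1))^(p+1) + (p+1)*((Λ-c*N)-(Λ-c*(N+1)))*(Λ-c*N)^p := key
        _ ≤ (Λ - c*(N+1))^(p+1) + (p+1)*c*(Λ-c*N)^p := by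
            have := Nat.mul_le_mul_right ((Λ-c*N)^p)
              (Nat.mul_le_mul_left (p+1) hd)
            omega
    calc Λ^(p+1) ≤ (p+1) * c * (∑ k ∈ Finset.range N, (Λ - c*k)^p) + (Λ - c*N)^(p+1) := ih
      _ ≤ (p+1) * c * (∑ k ∈ Finset.range N, (Λ - c*k)^p)
          + ((Λ - c*(N+1))^(p+1) + (p+1)*c*(Λ-c*N)^p) := by omega
      _ = (p+1) * c * ((∑ k ∈ Finset.range N, (Λ - c*k)^p) + (Λ-c*N)^p) + (Λ - c*(N+1))^(p+1) := by ring
      _ = _ := by ring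

lemma tel_low (p c Λ : ℕ) (hc : 0 < c) :
    Λ^(p+1) ≤ (p+1) * c * ∑ k ∈ Finset.range (Λ / c + 1), (Λ - c*k)^p := by
  have h := tel_low_aux p c Λ hc (Λ / c + 1)
  have hz : Λ - c*(Λ/c+1) = 0 := by
    have h1 := Nat.div_add_mod Λ c
    have h2 : Λ % c < c := Nat.mod_lt Λ hc
    have hms : c*(Λ/c+1) = c*(Λ/c) + c := by ring
    omega
  simpa [hz] using h

/-- Telescoping upper bound. -/
lemma tel_high_aux (p c C Λ : ℕ) (hc : 0 < c) :
    ∀ N, c*N ≤ Λ + c →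
      (p+1) * c * (∑ k ∈ Finset.range N, (Λ + C - c*k)^p) + (Λ + C + c - c*N)^(p+1)
        ≤ (Λ + C + c)^(p+1) := by
  intro N
  induction N with
  | zero => simp
  | succ N ih =>
    intro hN
    have hms : c*(N+1) = c*N + c := by ring
    have hN' : c*N ≤ Λ := by omega
    rw [Finset.sum_range_succ]
    set b := Λ + C - c*N with hb
    have hb1 : Λ + C + c - c*N = b + c := by omega
    have hb2 : Λ + C + c - c*(N+1) = b := by omega
    have key := key_high p c b
    have := ih (by omega)
    rw [hb1] at this
    calc (p+1) * c * ((∑ k ∈ Finset.range N, (Λ + C - c*k)^p) + (Λ + C - c*N)^p)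
          + (Λ + C + c - c*(N+1))^(p+1)
        = ((p+1) * c * (∑ k ∈ Finset.range N, (Λ + C - c*k)^p))
          + ((p+1)*c*b^p + b^(p+1)) := by rw [hb2, ← hb]; ring
      _ ≤ ((p+1) * c * (∑ k ∈ Finset.range N, (Λ + C - c*k)^p)) + (b+c)^(p+1) := by omega
      _ ≤ (Λ + C + c)^(p+1) := this

lemma tel_high (p c C Λ : ℕ) (hc : 0 < c) :
    (p+1) * c * (∑ k ∈ Finset.range (Λ/c + 1), (Λ + C - c*k)^p) ≤ (Λ + C + c)^(p+1) := by
  have hms : c*(Λ/c+1) = c*(Λ/c) + c := by ring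
  have h := tel_high_aux p c C Λ hc (Λ/c + 1) (by
    have : c * (Λ/c) ≤ Λ := Nat.mul_div_le Λ c
    omega)
  omega


lemma S_bounds : ∀ (m : ℕ) (c : Fin m → ℕ), (∀ i, 0 < c i) → ∀ Λ : ℕ,
    Λ^m ≤ m.factorial * (∏ i, c i) * S m c Λ ∧
    m.factorial * (∏ i, c i) * S m c Λ ≤ (Λ + ∑ i, c i)^m := by
  intro m
  induction m with
  | zero => intro c hc Λ; simp [S_zero]
  | succ m ih =>
    intro c hc Λ
    set c0 := c 0 with hc0
    have h0 : 0 < c0 := hc 0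
    set c' : Fin m → ℕ := fun i => c i.succ with hc'
    have hc'pos : ∀ i, 0 < c' i := fun i => hc i.succ
    have hprod : ∏ i, c i = c0 * ∏ i, c' i := Fin.prod_univ_succ c
    have hsum : ∑ i, c i = c0 + ∑ i, c' i := Fin.sum_univ_succ c
    have hrec := S_succ c hc Λ
    rw [← hc', ← hc0] at hrec
    have hfact : (m+1).factorial = (m+1) * m.factorial := Nat.factorial_succ m
    constructor
    · -- lower bound
      calc Λ^(m+1) ≤ (m+1) * c0 * ∑ k ∈ Finset.range (Λ / c0 + 1), (Λ - c0*k)^m :=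
            tel_low m c0 Λ h0
        _ ≤ (m+1) * c0 * ∑ k ∈ Finset.range (Λ / c0 + 1),
              (m.factorial * (∏ i, c' i) * S m c' (Λ - c0*k)) := by
            apply Nat.mul_le_mul_left
            apply Finset.sum_le_sum
            intro k _
            exact (ih c' hc'pos (Λ - c0*k)).1
        _ = (m+1).factorial * (∏ i, c i) * S (m+1) c Λ := by
            rw [hrec, hprod, hfact, Finset.mul_sum, Finset.mul_sum]
            exact Finset.sum_congr rfl (fun k _ => by ring)
    · -- upper bound
      calc (m+1).factorial * (∏ i, c i) * S (m+1) c Λ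
          = (m+1) * c0 * ∑ k ∈ Finset.range (Λ / c0 + 1),
              (m.factorial * (∏ i, c' i) * S m c' (Λ - c0*k)) := by
            rw [hrec, hprod, hfact, Finset.mul_sum, Finset.mul_sum]
            exact Finset.sum_congr rfl (fun k _ => by ring)
        _ ≤ (m+1) * c0 * ∑ k ∈ Finset.range (Λ / c0 + 1), (Λ - c0*k + ∑ i, c' i)^m := by
            apply Nat.mul_le_mul_left
            apply Finset.sum_le_sum
            intro k _
            exact (ih c' hc'pos (Λ - c0*k)).2
        _ ≤ (m+1) * c0 * ∑ k ∈ Finset.range (Λ / c0 + 1), (Λ + (∑ i, c' i) - c0*k)^m := by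
            apply Nat.mul_le_mul_left
            apply Finset.sum_le_sum
            intro k hk
            apply Nat.pow_le_pow_left
            have hk' : k < Λ/c0 + 1 := Finset.mem_range.1 hk
            have h1 : c0*k ≤ c0*(Λ/c0) := Nat.mul_le_mul_left _ (by omega)
            have h2 : c0*(Λ/c0) ≤ Λ := Nat.mul_div_le Λ c0
            omega
        _ ≤ (Λ + (∑ i, c' i) + c0)^(m+1) := tel_high m c0 (∑ i, c' i) Λ h0
        _ = (Λ + ∑ i, c i)^(m+1) := by rw [hsum]; ring_nf

lemma finset_gcd_bezout {ι : Type*} [DecidableEq ι] (c : ι → ℕ) :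
    ∀ s : Finset ι, ∃ f : ι → ℤ, ∑ i ∈ s, f i * c i = ((s.gcd c : ℕ) : ℤ) := by
  intro s
  induction s using Finset.induction with
  | empty => exact ⟨0, by simp⟩
  | @insert a s ha ih =>
    obtain ⟨f, hf⟩ := ih
    set d := s.gcd c with hd
    refine ⟨fun i => if i = a then Nat.gcdA (c a) d else Nat.gcdB (c a) d * f i, ?_⟩
    rw [Finset.sum_insert ha]
    have hgi : (insert a s).gcd c = Nat.gcd (c a) d := by
      rw [Finset.gcd_insert]
      rfl
    rw [hgi, Nat.gcd_eq_gcd_ab (c a) d]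
    simp only [if_pos rfl]
    have : ∑ i ∈ s, (if i = a then Nat.gcdA (c a) d else Nat.gcdB (c a) d * f i) * (c i : ℤ)
        = Nat.gcdB (c a) d * ∑ i ∈ s, f i * (c i : ℤ) := by
      rw [Finset.mul_sum]
      apply Finset.sum_congr rfl
      intro i hi
      rw [if_neg (by rintro rfl; exact ha hi)]
      ring
    rw [this, hf]
    simp only [if_true]
    ring

/-- The representable set: closed under addition and scalar multiples. -/
def Rep (m : ℕ) (c : Fin m → ℕ) (n : ℕ) : Prop := ∃ x : Fin m → ℕ, ∑ i, c i * x i = n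

lemma Rep.add {m c} {n₁ n₂ : ℕ} (h1 : Rep m c n₁) (h2 : Rep m c n₂) : Rep m c (n₁ + n₂) := by
  obtain ⟨x, hx⟩ := h1; obtain ⟨y, hy⟩ := h2
  exact ⟨x + y, by simp [Pi.add_apply, Nat.mul_add, Finset.sum_add_distrib, hx, hy]⟩

lemma Rep.smul {m c} {n : ℕ} (k : ℕ) (h : Rep m c n) : Rep m c (k * n) := by
  induction k with
  | zero => exact ⟨0, by simp⟩
  | succ k ih => simpa [Nat.succ_mul] using ih.add h

lemma frobenius (m : ℕ) (c : Fin m → ℕ) (hgcd : Finset.univ.gcd c = 1) :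
    ∃ n₀ : ℕ, ∀ n ≥ n₀, Rep m c n := by
  obtain ⟨f, hf⟩ := finset_gcd_bezout c Finset.univ
  rw [hgcd] at hf
  -- choose M with f i + M ≥ 0 for all i
  obtain ⟨M, hM⟩ : ∃ M : ℕ, ∀ i, 0 ≤ f i + M := by
    rcases isEmpty_or_nonempty (Fin m) with h | h'
    · exact ⟨0, fun i => (h.false i).elim⟩
    · obtain ⟨K, hK⟩ := Finset.exists_le (Finset.univ.image (fun i => (-(f i)).toNat))
      refine ⟨K, fun i => ?_⟩
      have := hK (-(f i)).toNat (Finset.mem_image_of_mem _ (Finset.mem_univ i))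
      have h2 : (-(f i)) ≤ ((-(f i)).toNat : ℤ) := Int.self_le_toNat _
      have h3 : ((-(f i)).toNat : ℤ) ≤ K := by exact_mod_cast this
      omega
  set s : ℕ := M * ∑ i, c i with hs
  have hrep_s : Rep m c s := ⟨fun _ => M, by
    rw [hs, Finset.mul_sum]
    exact Finset.sum_congr rfl fun i _ => by ring⟩
  have hrep_s1 : Rep m c (s + 1) := by
    refine ⟨fun i => (f i + M).toNat, ?_⟩
    have h4 : ∀ i : Fin m, ((c i : ℤ)) * (((f i + M).toNat : ℕ) : ℤ) = (c i : ℤ) * (f i + M) :=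
      fun i => by rw [Int.toNat_of_nonneg (hM i)]
    have h5 : ((∑ i, c i * (f i + M).toNat : ℕ) : ℤ) = ∑ i, (c i : ℤ) * (f i + (M:ℤ)) := by
      push_cast
      exact Finset.sum_congr rfl fun i _ => h4 i
    have h6 : ∑ i, (c i:ℤ) * (f i + (M:ℤ)) = (∑ i, f i * (c i:ℤ)) + (M:ℤ) * ∑ i, (c i:ℤ) := by
      rw [Finset.mul_sum, ← Finset.sum_add_distrib]
      exact Finset.sum_congr rfl fun i _ => by ring
    have h7 : ((∑ i, c i * (f i + M).toNat : ℕ) : ℤ) = (s : ℤ) + 1 := by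
      rw [h5, h6, hf, hs]
      push_cast
      ring
    exact_mod_cast h7
  rcases Nat.eq_zero_or_pos s with hs0 | hspos
  · refine ⟨0, fun n _ => ?_⟩
    have h1 : Rep m c 1 := by rw [hs0] at hrep_s1; simpa using hrep_s1
    simpa using Rep.smul n h1
  · refine ⟨s * s, fun n hn => ?_⟩
    set q := n / s with hq
    set r := n % s with hr
    have hrs : r < s := Nat.mod_lt n hspos
    have hqs : s ≤ q := by
      rw [hq]
      exact (Nat.le_div_iff_mul_le hspos).2 (by nlinarith)
    have hrq : r ≤ q := le_of_lt (lt_of_lt_of_le hrs hqs)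
    have hrep : Rep m c ((q - r) * s + r * (s + 1)) :=
      (Rep.smul (q - r) hrep_s).add (Rep.smul r hrep_s1)
    have e1 : (q - r) * s = q * s - r * s := Nat.sub_mul q r s
    have e2 : r * (s + 1) = r * s + r := by ring
    have e3 : r * s ≤ q * s := Nat.mul_le_mul_right _ hrq
    have e4 : s * q + r = n := by rw [hq, hr]; exact Nat.div_add_mod n s
    have e5 : s * q = q * s := Nat.mul_comm s q
    have : (q - r) * s + r * (s + 1) = n := by omega
    rwa [this] at hrep

-- real power gap lemmas
lemma pow_gap_le (p : ℕ) {a b : ℝ} (hb : 0 ≤ b) (hab : b ≤ a) :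
    a^(p+1) - b^(p+1) ≤ (p+1)*(a-b)*a^p := by
  rw [← geom_sum₂_mul a b (p+1)]
  have ha : 0 ≤ a := le_trans hb hab
  have hsum : (∑ i ∈ Finset.range (p+1), a^i * b^(p+1-1-i)) ≤ (p+1) * a^p := by
    calc (∑ i ∈ Finset.range (p+1), a^i * b^(p+1-1-i))
        ≤ ∑ i ∈ Finset.range (p+1), a^p := by
          apply Finset.sum_le_sum
          intro i hi
          have hi' : i < p + 1 := Finset.mem_range.1 hi
          calc a^i * b^(p+1-1-i) ≤ a^i * a^(p+1-1-i) :=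
                mul_le_mul_of_nonneg_left (pow_le_pow_left₀ hb hab _) (by positivity)
            _ = a^p := by rw [← pow_add]; congr 1; omega
      _ = (p+1) * a^p := by simp [mul_comm]
  calc (∑ i ∈ Finset.range (p+1), a^i * b^(p+1-1-i)) * (a - b)
      ≤ ((p+1) * a^p) * (a - b) := mul_le_mul_of_nonneg_right hsum (by linarith)
    _ = (p+1)*(a-b)*a^p := by ring

lemma pow_gap_ge (p : ℕ) {a b : ℝ} (hb : 0 ≤ b) (hab : b ≤ a) :
    (p+1)*(a-b)*b^p ≤ a^(p+1) - b^(p+1) := by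
  rw [← geom_sum₂_mul a b (p+1)]
  have ha : 0 ≤ a := le_trans hb hab
  have hsum : (p+1) * b^p ≤ (∑ i ∈ Finset.range (p+1), a^i * b^(p+1-1-i)) := by
    calc ((p:ℝ)+1) * b^p = ∑ i ∈ Finset.range (p+1), b^p := by simp [mul_comm]
      _ ≤ ∑ i ∈ Finset.range (p+1), a^i * b^(p+1-1-i) := by
          apply Finset.sum_le_sum
          intro i hi
          have hi' : i < p + 1 := Finset.mem_range.1 hi
          calc b^p = b^i * b^(p+1-1-i) := by rw [← pow_add]; congr 1; omega
            _ ≤ a^i * b^(p+1-1-i) :=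
                mul_le_mul_of_nonneg_right (pow_le_pow_left₀ hb hab _) (by positivity)
  calc ((p:ℝ)+1)*(a-b)*b^p = ((p+1) * b^p) * (a-b) := by ring
    _ ≤ (∑ i ∈ Finset.range (p+1), a^i * b^(p+1-1-i)) * (a - b) :=
        mul_le_mul_of_nonneg_right hsum (by linarith)


noncomputable def Bd (m : ℕ) (c : Fin m → ℕ) (lam : ℕ) : ℕ :=
  Nat.card {x : Fin m → ℕ // ∑ i, c i * x i = lam}


lemma B_mono {m : ℕ} {c : Fin m → ℕ} (hc : ∀ i, 0 < c i) (μ d : ℕ) (hd : Rep m c d) :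
    Bd m c μ ≤ Bd m c (μ + d) := by
  obtain ⟨r, hr⟩ := hd
  have : Finite {x : Fin m → ℕ // ∑ i, c i * x i = μ + d} := finite_eq hc _
  apply Nat.card_le_card_of_injective
    (fun x => (⟨x.1 + r, by
      simp only [Pi.add_apply, Nat.mul_add, Finset.sum_add_distrib, x.2, hr]⟩ :
      {x : Fin m → ℕ // ∑ i, c i * x i = μ + d}))
  intro x y hxy
  have h1 : x.1 + r = y.1 + r := congrArg Subtype.val hxy
  ext i
  have := congrFun h1 i
  simpa using this

lemma S_eq_sum_B {m : ℕ} (c : Fin m → ℕ) (hc : ∀ i, 0 < c i) (Λ : ℕ) :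
    S m c Λ = ∑ lam ∈ Finset.range (Λ+1), Bd m c lam := by
  have hfin : ∀ lam : ℕ, Finite {x : Fin m → ℕ // ∑ i, c i * x i = lam} :=
    fun lam => finite_eq hc lam
  have e : {x : Fin m → ℕ // ∑ i, c i * x i ≤ Λ} ≃
      Σ lam : Fin (Λ+1), {x : Fin m → ℕ // ∑ i, c i * x i = lam.1} := by
    refine ⟨fun x => ⟨⟨∑ i, c i * x.1 i, Nat.lt_succ_of_le x.2⟩, ⟨x.1, rfl⟩⟩,
      fun lx => ⟨lx.2.1, by rw [lx.2.2]; exact Nat.lt_succ_iff.1 lx.1.2⟩, ?_, ?_⟩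
    · rintro ⟨x, hx⟩; rfl
    · rintro ⟨⟨lam, hlam⟩, ⟨x, hx⟩⟩
      dsimp only at hx
      subst hx
      rfl
  rw [S, Nat.card_congr e, ncard_sigma]
  rw [Fin.sum_univ_eq_sum_range (fun lam => Nat.card {x : Fin m → ℕ // ∑ i, c i * x i = lam})]
  rfl

lemma win_low {m : ℕ} {c : Fin m → ℕ} (hc : ∀ i, 0 < c i) (n₀ : ℕ)
    (hrep : ∀ d ≥ n₀, Rep m c d) (u L : ℕ) :
    S m c (u + L) ≤ S m c u + L * Bd m c (u + L + n₀) := by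
  rw [S_eq_sum_B c hc, S_eq_sum_B c hc]
  have hsplit : ∑ lam ∈ Finset.range (u + L + 1), Bd m c lam
      = ∑ lam ∈ Finset.range (u+1), Bd m c lam + ∑ k ∈ Finset.range L, Bd m c (u+1+k) := by
    have : u + L + 1 = (u + 1) + L := by omega
    rw [this, Finset.sum_range_add]
  rw [hsplit]
  have hbound : ∑ k ∈ Finset.range L, Bd m c (u+1+k) ≤ L * Bd m c (u + L + n₀) := by
    calc ∑ k ∈ Finset.range L, Bd m c (u+1+k) ≤ ∑ k ∈ Finset.range L, Bd m c (u + L + n₀) := by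
          apply Finset.sum_le_sum
          intro k hk
          have hk' : k < L := Finset.mem_range.1 hk
          have heq : (u+1+k) + (n₀ + (L - 1 - k)) = u + L + n₀ := by omega
          calc Bd m c (u+1+k) ≤ Bd m c ((u+1+k) + (n₀ + (L - 1 - k))) :=
                B_mono hc _ _ (hrep _ (by omega))
            _ = Bd m c (u + L + n₀) := by rw [heq]
      _ = L * Bd m c (u + L + n₀) := by simp [mul_comm]
  omega

lemma win_high {m : ℕ} {c : Fin m → ℕ} (hc : ∀ i, 0 < c i) (n₀ : ℕ)
    (hrep : ∀ d ≥ n₀, Rep m c d) (lam L : ℕ) :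
    S m c (lam + n₀) + L * Bd m c lam ≤ S m c (lam + n₀ + L) := by
  rw [S_eq_sum_B c hc, S_eq_sum_B c hc]
  have hsplit : ∑ μ ∈ Finset.range (lam + n₀ + L + 1), Bd m c μ
      = ∑ μ ∈ Finset.range (lam + n₀ + 1), Bd m c μ
        + ∑ k ∈ Finset.range L, Bd m c (lam + n₀ + 1 + k) := by
    have : lam + n₀ + L + 1 = (lam + n₀ + 1) + L := by omega
    rw [this, Finset.sum_range_add]
  rw [hsplit]
  have hbound : L * Bd m c lam ≤ ∑ k ∈ Finset.range L, Bd m c (lam + n₀ + 1 + k) := by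
    calc L * Bd m c lam = ∑ k ∈ Finset.range L, Bd m c lam := by simp [mul_comm]
      _ ≤ ∑ k ∈ Finset.range L, Bd m c (lam + n₀ + 1 + k) := by
          apply Finset.sum_le_sum
          intro k hk
          have heq : lam + (n₀ + 1 + k) = lam + n₀ + 1 + k := by omega
          calc Bd m c lam ≤ Bd m c (lam + (n₀ + 1 + k)) :=
                B_mono hc _ _ (hrep _ (by omega))
            _ = Bd m c (lam + n₀ + 1 + k) := by rw [heq]
  omega
open Filter

lemma t_sqrt_nat : Tendsto Nat.sqrt atTop atTop := by
  apply Filter.tendsto_atTop_atTop_of_monotone (fun a b h => Nat.sqrt_le_sqrt h)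
  intro b
  exact ⟨b*b, le_of_eq (Nat.sqrt_eq b).symm⟩

lemma t_sqrt : Tendsto (fun lam : ℕ => ((Nat.sqrt lam : ℕ) : ℝ)) atTop atTop :=
  tendsto_natCast_atTop_atTop.comp t_sqrt_nat

lemma t_div_sqrt (a : ℝ) : Tendsto (fun lam : ℕ => a / (Nat.sqrt lam : ℝ)) atTop (nhds 0) :=
  Tendsto.div_atTop tendsto_const_nhds t_sqrt

lemma t_div_lam (a : ℝ) : Tendsto (fun lam : ℕ => a / (lam : ℝ)) atTop (nhds 0) :=
  Tendsto.div_atTop tendsto_const_nhds tendsto_natCast_atTop_atTop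

lemma t_sqrt_div_lam : Tendsto (fun lam : ℕ => (Nat.sqrt lam : ℝ) / (lam : ℝ)) atTop (nhds 0) := by
  apply squeeze_zero' (t₀ := atTop) (g := fun lam : ℕ => 1 / (Nat.sqrt lam : ℝ))
  · filter_upwards [eventually_ge_atTop 1] with lam hlam
    positivity
  · filter_upwards [eventually_ge_atTop 1] with lam hlam
    have hs : 1 ≤ Nat.sqrt lam := Nat.le_sqrt.2 (by omega)
    have hs2 : (Nat.sqrt lam) * (Nat.sqrt lam) ≤ lam := by
      have := Nat.sqrt_le' lam
      nlinarith [Nat.sqrt_le' lam, sq (Nat.sqrt lam)]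
    have hsr : (1:ℝ) ≤ (Nat.sqrt lam : ℝ) := by exact_mod_cast hs
    have hlr : (1:ℝ) ≤ (lam : ℝ) := by exact_mod_cast hlam
    have hs2r : ((Nat.sqrt lam : ℝ)) * (Nat.sqrt lam : ℝ) ≤ (lam : ℝ) := by exact_mod_cast hs2
    rw [div_le_div_iff₀ (by linarith) (by linarith)]
    nlinarith
  · exact Tendsto.div_atTop tendsto_const_nhds t_sqrt

theorem final (p : ℕ) (Bv : ℕ → ℕ) (F C n₀ : ℕ) (R : ℝ) (hR : 0 < R)
    (hFR : (F:ℝ) = ((p:ℝ)+1) * R)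
    (hupper : ∀ lam L : ℕ, L * Bv lam * F + (lam+n₀)^(p+1) ≤ (lam + n₀ + L + C)^(p+1))
    (hlower : ∀ u L : ℕ, (u+L)^(p+1) ≤ (u+C)^(p+1) + L * F * Bv (u+L+n₀)) :
    Tendsto (fun lam : ℕ => ((Bv lam : ℝ) * R) / (lam:ℝ) ^ p) atTop (nhds 1) := by
  set s : ℕ → ℕ := Nat.sqrt with hs
  -- limit of upper bound
  have thi : Tendsto (fun lam : ℕ =>
      (1 + (C:ℝ)/(s lam)) * (((lam:ℝ) + n₀ + s lam + C)/lam)^p) atTop (nhds 1) := by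
    have t1 : Tendsto (fun lam : ℕ => 1 + (C:ℝ)/(s lam)) atTop (nhds 1) := by
      simpa using tendsto_const_nhds.add (t_div_sqrt C)
    have t2 : Tendsto (fun lam : ℕ => ((lam:ℝ) + n₀ + s lam + C)/lam) atTop (nhds 1) := by
      have t2' : Tendsto (fun lam : ℕ =>
          1 + ((n₀:ℝ)/lam + (s lam : ℝ)/lam + (C:ℝ)/lam)) atTop (nhds 1) := by
        have := ((t_div_lam (n₀:ℝ)).add t_sqrt_div_lam).add (t_div_lam (C:ℝ))
        simpa using tendsto_const_nhds.add this
      apply t2'.congr'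
      filter_upwards [eventually_ge_atTop 1] with lam hlam
      have hl0 : (lam:ℝ) ≠ 0 := by positivity
      field_simp
      ring
    have := t1.mul (t2.pow p)
    simpa using this
  -- limit of lower bound
  have tlo : Tendsto (fun lam : ℕ =>
      (1 - (C:ℝ)/(s lam)) * (((lam:ℝ) - s lam - n₀ + C)/lam)^p) atTop (nhds 1) := by
    have t1 : Tendsto (fun lam : ℕ => 1 - (C:ℝ)/(s lam)) atTop (nhds 1) := by
      simpa using tendsto_const_nhds.sub (t_div_sqrt C)
    have t2 : Tendsto (fun lam : ℕ => ((lam:ℝ) - s lam - n₀ + C)/lam) atTop (nhds 1) := by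
      have t2' : Tendsto (fun lam : ℕ =>
          1 - ((s lam : ℝ)/lam) - (n₀:ℝ)/lam + (C:ℝ)/lam) atTop (nhds 1) := by
        have h0 : Tendsto (fun _ : ℕ => (1:ℝ)) atTop (nhds 1) := tendsto_const_nhds
        have := ((h0.sub t_sqrt_div_lam).sub (t_div_lam (n₀:ℝ))).add (t_div_lam (C:ℝ))
        simpa using this
      apply t2'.congr'
      filter_upwards [eventually_ge_atTop 1] with lam hlam
      have hl0 : (lam:ℝ) ≠ 0 := by positivity
      field_simp
    have := t1.mul (t2.pow p)
    simpa using this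
  -- squeeze
  apply tendsto_of_tendsto_of_tendsto_of_le_of_le' tlo thi
  · -- lower bound eventually
    have hev : ∀ᶠ lam : ℕ in atTop, (n₀ + C + 2)^2 ≤ lam := eventually_ge_atTop _
    filter_upwards [hev] with lam hlam
    have hsl : n₀ + C + 2 ≤ s lam := Nat.le_sqrt.2 (by nlinarith)
    have hss : s lam * s lam ≤ lam := by nlinarith [Nat.sqrt_le' lam, sq (s lam)]
    have hs1 : 1 ≤ s lam := by omega
    have hsn : s lam + n₀ ≤ lam := by nlinarith
    have hlam1 : 1 ≤ lam := by omega
    set u : ℕ := lam - s lam - n₀ with hu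
    have hue : u + s lam + n₀ = lam := by omega
    have hnat := hlower u (s lam)
    rw [show u + s lam + n₀ = lam from hue] at hnat
    -- to reals
    have hcast : ((u:ℝ)) = (lam:ℝ) - s lam - n₀ := by
      have h2 : ((u + s lam + n₀ : ℕ) : ℝ) = (lam : ℝ) := by exact_mod_cast congrArg Nat.cast hue
      push_cast at h2
      linarith
    set a : ℝ := (u:ℝ) + s lam with ha
    set b : ℝ := (u:ℝ) + C with hb
    have hb0 : 0 ≤ b := by positivity
    have hba : b ≤ a := by
      have : (C:ℝ) ≤ (s lam : ℝ) := by exact_mod_cast (by omega : C ≤ s lam)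
      rw [ha, hb]; linarith
    have hnatr : a^(p+1) ≤ b^(p+1) + (s lam : ℝ) * F * Bv lam := by
      have := hnat
      have hcast2 : ((u + s lam)^(p+1) : ℕ) ≤ ((u+C)^(p+1) + s lam * F * Bv lam : ℕ) := this
      calc a^(p+1) = (((u + s lam)^(p+1) : ℕ) : ℝ) := by push_cast; ring
        _ ≤ (((u+C)^(p+1) + s lam * F * Bv lam : ℕ) : ℝ) := by exact_mod_cast hcast2
        _ = b^(p+1) + (s lam : ℝ) * F * Bv lam := by push_cast; ring
    have hgap := pow_gap_ge p hb0 hba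
    have hab : a - b = (s lam : ℝ) - C := by rw [ha, hb]; ring
    have hkey : ((s lam : ℝ) - C) * b^p ≤ (s lam : ℝ) * ((Bv lam : ℝ) * R) := by
      have h1 : ((p:ℝ)+1) * (((s lam:ℝ) - C) * b^p) ≤ ((p:ℝ)+1) * ((s lam : ℝ) * ((Bv lam : ℝ) * R)) := by
        calc ((p:ℝ)+1) * (((s lam:ℝ) - C) * b^p) = ((p:ℝ)+1)*(a-b)*b^p := by rw [hab]; ring
          _ ≤ a^(p+1) - b^(p+1) := hgap
          _ ≤ (s lam : ℝ) * F * Bv lam := by linarith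
          _ = ((p:ℝ)+1) * ((s lam : ℝ) * ((Bv lam : ℝ) * R)) := by rw [hFR]; ring
      exact le_of_mul_le_mul_left h1 (by positivity)
    -- rewrite target
    have hsr : (0:ℝ) < (s lam : ℝ) := by exact_mod_cast hs1
    have hlr : (0:ℝ) < (lam : ℝ) := by exact_mod_cast hlam1
    have hblam : ((lam:ℝ) - s lam - n₀ + C) = b := by rw [hb, hcast]
    rw [hblam]
    have h1C : 1 - (C:ℝ)/(s lam) = ((s lam:ℝ) - C)/(s lam) := by field_simp
    rw [h1C, div_pow]
    rw [div_mul_div_comm]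
    rw [div_le_div_iff₀ (by positivity) (by positivity)]
    calc ((s lam:ℝ) - C) * b^p * (lam:ℝ)^p ≤ ((s lam : ℝ) * ((Bv lam : ℝ) * R)) * (lam:ℝ)^p := by
          apply mul_le_mul_of_nonneg_right hkey (by positivity)
      _ = (Bv lam : ℝ) * R * ((s lam : ℝ) * (lam:ℝ)^p) := by ring
  · -- upper bound eventually
    have hev : ∀ᶠ lam : ℕ in atTop, (n₀ + C + 2)^2 ≤ lam := eventually_ge_atTop _
    filter_upwards [hev] with lam hlam
    have hsl : n₀ + C + 2 ≤ s lam := Nat.le_sqrt.2 (by nlinarith)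
    have hs1 : 1 ≤ s lam := by omega
    have hlam1 : 1 ≤ lam := by nlinarith
    set a : ℝ := (lam:ℝ) + n₀ + s lam + C with ha
    set b : ℝ := (lam:ℝ) + n₀ with hb
    have hb0 : 0 ≤ b := by positivity
    have hba : b ≤ a := by
      have : (0:ℝ) ≤ (s lam : ℝ) + C := by positivity
      rw [ha, hb]; linarith
    have hnat := hupper lam (s lam)
    have hnatr : (s lam : ℝ) * Bv lam * F + b^(p+1) ≤ a^(p+1) := by
      calc (s lam : ℝ) * Bv lam * F + b^(p+1)
          = ((s lam * Bv lam * F + (lam+n₀)^(p+1) : ℕ) : ℝ) := by push_cast; ring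
        _ ≤ (((lam + n₀ + s lam + C)^(p+1) : ℕ) : ℝ) := by exact_mod_cast hnat
        _ = a^(p+1) := by push_cast; ring
    have hgap := pow_gap_le p hb0 hba
    have hab : a - b = (s lam : ℝ) + C := by rw [ha, hb]; ring
    have hkey : (s lam : ℝ) * ((Bv lam : ℝ) * R) ≤ ((s lam : ℝ) + C) * a^p := by
      have h1 : ((p:ℝ)+1) * ((s lam : ℝ) * ((Bv lam : ℝ) * R))
          ≤ ((p:ℝ)+1) * (((s lam : ℝ) + C) * a^p) := by
        calc ((p:ℝ)+1) * ((s lam : ℝ) * ((Bv lam : ℝ) * R))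
            = (s lam : ℝ) * Bv lam * F := by rw [hFR]; ring
          _ ≤ a^(p+1) - b^(p+1) := by linarith
          _ ≤ ((p:ℝ)+1)*(a-b)*a^p := hgap
          _ = ((p:ℝ)+1) * (((s lam : ℝ) + C) * a^p) := by rw [hab]; ring
      exact le_of_mul_le_mul_left h1 (by positivity)
    have hsr : (0:ℝ) < (s lam : ℝ) := by exact_mod_cast hs1
    have hlr : (0:ℝ) < (lam : ℝ) := by exact_mod_cast hlam1
    have h1C : 1 + (C:ℝ)/(s lam) = ((s lam:ℝ) + C)/(s lam) := by field_simp
    rw [h1C, div_pow, div_mul_div_comm]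
    rw [div_le_div_iff₀ (by positivity) (by positivity)]
    calc (Bv lam : ℝ) * R * ((s lam : ℝ) * (lam:ℝ)^p)
        = ((s lam : ℝ) * ((Bv lam : ℝ) * R)) * (lam:ℝ)^p := by ring
      _ ≤ (((s lam : ℝ) + C) * a^p) * (lam:ℝ)^p :=
          mul_le_mul_of_nonneg_right hkey (by positivity)
      _ = ((s lam:ℝ) + C) * a^p * (lam:ℝ)^p := by ring
end Stmt11

open Filter in
theorem stmt_11 (m : ℕ) (hm : 1 ≤ m) (c : Fin m → ℕ) (hc : ∀ i, 0 < c i)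
    (hgcd : Finset.univ.gcd c = 1)
    (B : ℕ → ℕ)
    (hB : ∀ lam, B lam = Nat.card {x : Fin m → ℕ // ∑ i, c i * x i = lam}) :
    Tendsto (fun lam : ℕ =>
        ((B lam : ℝ) * (Nat.factorial (m - 1)) * ∏ i, (c i : ℝ)) / (lam : ℝ) ^ (m - 1))
      atTop (nhds 1) := by
  open Stmt11 in
  obtain ⟨p, rfl⟩ : ∃ p, m = p + 1 := ⟨m - 1, by omega⟩
  have hBd : ∀ lam, B lam = Bd (p+1) c lam := hB
  obtain ⟨n₀, hn₀⟩ := frobenius (p+1) c hgcd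
  set F : ℕ := (p+1).factorial * ∏ i, c i with hFdef
  set C : ℕ := ∑ i, c i with hCdef
  set R : ℝ := (p.factorial : ℝ) * ∏ i, (c i : ℝ) with hRdef
  have hR : 0 < R := by
    have h1 : (0:ℝ) < p.factorial := by exact_mod_cast p.factorial_pos
    have h2 : (0:ℝ) < ∏ i, (c i : ℝ) := Finset.prod_pos fun i _ => by exact_mod_cast hc i
    exact mul_pos h1 h2
  have hFR : (F:ℝ) = ((p:ℝ)+1) * R := by
    rw [hFdef, hRdef]
    push_cast [Nat.factorial_succ]
    ring
  have hupper : ∀ lam L : ℕ, L * B lam * F + (lam+n₀)^(p+1) ≤ (lam + n₀ + L + C)^(p+1) := by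
    intro lam L
    have h1 := (S_bounds (p+1) c hc (lam+n₀)).1
    have h2 := (S_bounds (p+1) c hc (lam+n₀+L)).2
    have h3 := win_high hc n₀ hn₀ lam L
    calc L * B lam * F + (lam+n₀)^(p+1)
        ≤ L * Bd (p+1) c lam * F + F * S (p+1) c (lam+n₀) := by
          rw [hBd]; exact Nat.add_le_add_left h1 _
      _ = F * (S (p+1) c (lam+n₀) + L * Bd (p+1) c lam) := by ring
      _ ≤ F * S (p+1) c (lam+n₀+L) := Nat.mul_le_mul_left F h3
      _ ≤ (lam + n₀ + L + C)^(p+1) := h2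
  have hlower : ∀ u L : ℕ, (u+L)^(p+1) ≤ (u+C)^(p+1) + L * F * B (u+L+n₀) := by
    intro u L
    have h1 := (S_bounds (p+1) c hc (u+L)).1
    have h2 := (S_bounds (p+1) c hc u).2
    have h3 := win_low hc n₀ hn₀ u L
    calc (u+L)^(p+1) ≤ F * S (p+1) c (u+L) := h1
      _ ≤ F * (S (p+1) c u + L * Bd (p+1) c (u+L+n₀)) := Nat.mul_le_mul_left F h3
      _ = F * S (p+1) c u + L * F * Bd (p+1) c (u+L+n₀) := by ring
      _ ≤ (u+C)^(p+1) + L * F * B (u+L+n₀) := by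
          rw [hBd]; exact Nat.add_le_add_right h2 _
  have hmain := final p B F C n₀ R hR hFR hupper hlower
  apply hmain.congr
  intro lam
  simp only [Nat.add_sub_cancel]
  rw [hRdef]
  ring
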